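/- arXiv:1503.08676 — 9 statements merged into one kernel-verified Lean document; each statement's English description precedes it below -/
import Mathlib

section
/- Let τ > 0 and γ > 0. Then the transmissibility τ̃(K) = 1 − (Kγ/(τ + Kγ))^K is strictly increasing in the number of stages: for all positive integers K < K′ one has 1 − (Kγ/(τ + Kγ))^K < 1 − (K′γ/(τ + K′γ))^{K′}. -/
set_option autoImplicit false

/-- The transmissibility `τ̃(K) = 1 - (Kγ/(τ + Kγ))^K` is strictly increasing in the
number of infectious stages `K`. -/
theorem transmissibility_strictMono (τ γ : ℝ) (hτ : 0 < τ) (hγ : 0 < γ)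
    (K K' : ℕ) (hK : 0 < K) (hKK' : K < K') :
    1 - (((K : ℝ) * γ) / (τ + (K : ℝ) * γ)) ^ K <
      1 - (((K' : ℝ) * γ) / (τ + (K' : ℝ) * γ)) ^ K' := by
  set a : ℝ := (K : ℝ) with ha
  set b : ℝ := (K' : ℝ) with hb
  have ha0 : (0:ℝ) < a := by rw [ha]; exact_mod_cast hK
  have hab : a < b := by rw [ha, hb]; exact_mod_cast hKK'
  have hb0 : (0:ℝ) < b := ha0.trans hab
  set x : ℝ := τ / γ with hx
  have hx0 : 0 < x := div_pos hτ hγ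
  have hs0 : 0 < x / a := div_pos hx0 ha0
  have hsb : 0 < x / b := div_pos hx0 hb0
  -- strict Bernoulli: (1 + x/a)^(a/b) < 1 + x/b
  have h1 : (1 + x / a) ^ ((a / b : ℝ)) < 1 + x / b := by
    have := rpow_one_add_lt_one_add_mul_self (s := x / a) (by linarith) hs0.ne'
      (div_pos ha0 hb0) ((div_lt_one hb0).2 hab)
    have heq : 1 + a / b * (x / a) = 1 + x / b := by field_simp
    rwa [heq] at this
  have hpos : (0:ℝ) < 1 + x / a := by linarith
  have hposb : (0:ℝ) < 1 + x / b := by linarith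
  have key : (1 + x / a) ^ K < (1 + x / b) ^ K' := by
    have h2 := Real.rpow_lt_rpow (Real.rpow_nonneg hpos.le _) h1 hb0
    rwa [← Real.rpow_mul hpos.le, div_mul_cancel₀ _ hb0.ne', ha, hb,
      Real.rpow_natCast, Real.rpow_natCast] at h2
  -- rewrite the fractions as inverses
  have hda : a * γ / (τ + a * γ) = (1 + x / a)⁻¹ := by
    rw [hx]; field_simp; ring
  have hdb : b * γ / (τ + b * γ) = (1 + x / b)⁻¹ := by
    rw [hx]; field_simp; ring
  rw [hda, hdb, inv_pow, inv_pow]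
  have := inv_strictAnti₀ (pow_pos hpos K) key
  linarith
end

section
/- Let τ, γ, n, λ be real numbers and K a positive integer, and write d = Kγ + τ + λ. Let A be the K × K real matrix with entries A₁₁ = τ(n−1) − d, A₁ⱼ = τ(n−1) for 2 ≤ j ≤ K, Aᵢᵢ = −d for 2 ≤ i ≤ K, A_{i+1,i} = Kγ for 1 ≤ i ≤ K−1, and all other entries zero. Then det A = (−1)^K [ d^K − τ(n−1)( d^{K−1} + Σ_{i=1}^{K−1} (Kγ)^{K−i} d^{i−1} ) ]. -/
set_option autoImplicit false

open Finset

def Bmat (a b c : ℝ) (m : ℕ) : Matrix (Fin m) (Fin m) ℝ :=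
  fun i j => if (i : ℕ) = 0 then (if (j : ℕ) = 0 then a - b else a)
    else if (i : ℕ) = (j : ℕ) then -b
    else if (i : ℕ) = (j : ℕ) + 1 then c
    else 0

lemma Bdet (a b c : ℝ) : ∀ m : ℕ,
    (Bmat a b c (m+1)).det =
      (-1)^(m+1) * (b^(m+1) - a * ∑ j ∈ range (m+1), c^j * b^(m-j))
  | 0 => by
    rw [Matrix.det_fin_one]
    simp [Bmat]
  | (m+1) => by
    rw [Matrix.det_succ_column _ (Fin.last (m+1))]
    rw [Fintype.sum_eq_add (0 : Fin (m+2)) (Fin.last (m+1))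
      (by simp [Fin.ext_iff, Fin.last]) ?_]
    · have h1 : ((Bmat a b c (m+1+1)).submatrix (Fin.last (m+1)).succAbove
          (Fin.last (m+1)).succAbove).det = (Bmat a b c (m+1)).det := by
        congr 1
        ext i j
        simp [Bmat, Fin.succAbove_last, Matrix.submatrix, Fin.coe_castSucc]
      have hdiag : ∀ i : Fin (m+1), Bmat a b c (m+1+1) i.succ i.castSucc = c := by
        intro i
        simp only [Bmat, Fin.val_succ, Fin.coe_castSucc]
        rw [if_neg (by omega), if_neg (by omega)]; simp
      have h2 : ((Bmat a b c (m+1+1)).submatrix (0 : Fin (m+2)).succAbove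
          (Fin.last (m+1)).succAbove).det = c ^ (m+1) := by
        have ht : ((Bmat a b c (m+1+1)).submatrix (0 : Fin (m+2)).succAbove
            (Fin.last (m+1)).succAbove).det = ∏ i : Fin (m+1),
            ((Bmat a b c (m+1+1)).submatrix (0 : Fin (m+2)).succAbove
            (Fin.last (m+1)).succAbove) i i := by
          apply Matrix.det_of_upperTriangular
          intro i j hij
          simp only [Matrix.submatrix, Fin.succAbove_last, Fin.succAbove_zero, Bmat,
            Matrix.of_apply, Fin.val_succ, Fin.coe_castSucc]
          have hji : (j : ℕ) < (i : ℕ) := hij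
          rw [if_neg (by omega), if_neg (by omega), if_neg (by omega)]
        rw [ht]
        simp [Matrix.submatrix_apply, Fin.succAbove_last, Fin.succAbove_zero, hdiag]
      have h3 : Bmat a b c (m+1+1) 0 (Fin.last (m+1)) = a := by
        simp [Bmat, Fin.last]
      have h4 : Bmat a b c (m+1+1) (Fin.last (m+1)) (Fin.last (m+1)) = -b := by
        simp [Bmat, Fin.last]
      have hsum : ∑ j ∈ range (m+1), c ^ j * b ^ (m + 1 - j)
          = b * ∑ j ∈ range (m+1), c ^ j * b ^ (m - j) := by
        rw [Finset.mul_sum]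
        apply Finset.sum_congr rfl
        intro j hj
        simp only [Finset.mem_range] at hj
        have : m + 1 - j = (m - j) + 1 := by omega
        rw [this, pow_succ]
        ring
      have hs2 : ∑ j ∈ range (m+1+1), c ^ j * b ^ (m + 1 - j)
          = b * (∑ j ∈ range (m+1), c ^ j * b ^ (m - j)) + c ^ (m+1) := by
        rw [Finset.sum_range_succ, hsum]
        simp
      have he : (-1 : ℝ) ^ ((m+1) + (m+1)) = 1 :=
        Even.neg_one_pow ⟨m+1, rfl⟩
      rw [h1, h2, h3, h4, Bdet a b c m, hs2]
      simp only [Fin.val_zero, Fin.val_last, Nat.zero_add, he]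
      ring
    · intro x ⟨hx0, hxl⟩
      have : Bmat a b c (m+1+1) x (Fin.last (m+1)) = 0 := by
        simp only [Bmat, Fin.val_last]
        have h0 : (x : ℕ) ≠ 0 := fun h => hx0 (Fin.ext h)
        have hl : (x : ℕ) ≠ m + 1 := fun h => hxl (Fin.ext h)
        have hb : (x : ℕ) < m + 2 := x.isLt
        rw [if_neg h0, if_neg hl, if_neg (by omega)]
      rw [this]
      ring

/-- Determinant of the nontrivial block of the linearisation of the closed pairwise
SI^K R model about the disease-free equilibrium.  With `d = Kγ + τ + λ`, the `K × K`
matrix with first row `(τ(n-1) - d, τ(n-1), …, τ(n-1))`, diagonal entries `-d` below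
the first row, subdiagonal entries `Kγ`, and zeros elsewhere, has determinant
`(-1)^K [ d^K - τ(n-1)( d^{K-1} + Σ_{i=1}^{K-1} (Kγ)^{K-i} d^{i-1} ) ]`. -/
theorem pairwise_block_det (τ γ n lam d : ℝ) (K : ℕ) (hK : 0 < K)
    (hd : d = (K : ℝ) * γ + τ + lam) :
    Matrix.det (fun i j : Fin K =>
        if (i : ℕ) = 0 then (if (j : ℕ) = 0 then τ * (n - 1) - d else τ * (n - 1))
        else if (i : ℕ) = (j : ℕ) then -d
        else if (i : ℕ) = (j : ℕ) + 1 then (K : ℝ) * γ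
        else 0) =
      (-1 : ℝ) ^ K *
        (d ^ K - τ * (n - 1) *
          (d ^ (K - 1) + ∑ i ∈ Finset.Icc 1 (K - 1), ((K : ℝ) * γ) ^ (K - i) * d ^ (i - 1))) := by
  obtain ⟨m, rfl⟩ : ∃ m, K = m + 1 := ⟨K - 1, (Nat.succ_pred_eq_of_pos hK).symm⟩
  set c : ℝ := ((m + 1 : ℕ) : ℝ) * γ with hc
  have hB : Matrix.det (fun i j : Fin (m+1) =>
        if (i : ℕ) = 0 then (if (j : ℕ) = 0 then τ * (n - 1) - d else τ * (n - 1))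
        else if (i : ℕ) = (j : ℕ) then -d
        else if (i : ℕ) = (j : ℕ) + 1 then c
        else 0) = (Bmat (τ * (n - 1)) d c (m+1)).det := rfl
  rw [hB, Bdet]
  have hsum : ∑ j ∈ range (m+1), c ^ j * d ^ (m - j)
      = d ^ m + ∑ i ∈ Finset.Icc 1 m, c ^ (m + 1 - i) * d ^ (i - 1) := by
    rw [Finset.sum_range_succ']
    rw [add_comm]
    congr 1
    · simp
    · apply Finset.sum_nbij' (fun j => m - j) (fun i => m - i)
      · intro j hj
        simp only [Finset.mem_range] at hj
        simp only [Finset.mem_Icc]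
        omega
      · intro i hi
        simp only [Finset.mem_Icc] at hi
        simp only [Finset.mem_range]
        omega
      · intro j hj
        simp only [Finset.mem_range] at hj
        omega
      · intro i hi
        simp only [Finset.mem_Icc] at hi
        omega
      · intro j hj
        simp only [Finset.mem_range] at hj
        have e1 : m + 1 - (m - j) = j + 1 := by omega
        have e2 : m - j - 1 = m - (j + 1) := by omega
        rw [e1, e2]
  rw [hsum]
  have : m + 1 - 1 = m := rfl
  rw [this]
end

section
/- Let τ > 0, γ > 0, n > 1 be real numbers and K a positive integer. Then (τ + Kγ)^K − τ(n−1)[ (τ + Kγ)^{K−1} + Σ_{i=1}^{K−1} (Kγ)^{K−i} (τ + Kγ)^{i−1} ] = (τ + Kγ)^K ( 1 − (n−1)·τ̃ ), where τ̃ = 1 − (Kγ/(τ + Kγ))^K. In particular, λ = 0 is a root of the characteristic factor φ(λ) = (τ+Kγ+λ)^K − τ(n−1)[ (τ+Kγ+λ)^{K−1} + Σ_{i=1}^{K−1} (Kγ)^{K−i} (τ+Kγ+λ)^{i−1} ] if and only if (n−1)·τ̃ = 1. -/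
set_option autoImplicit false

open Finset

/-- Evaluating the characteristic factor of the linearised closed pairwise SI^K R model
at `λ = 0` gives `(τ + Kγ)^K (1 - (n-1) τ̃)` with `τ̃ = 1 - (Kγ/(τ + Kγ))^K`; in
particular `λ = 0` is a root of the characteristic factor `φ` iff `(n-1) τ̃ = 1`. -/
theorem characteristic_factor_at_zero (τ γ n : ℝ) (hτ : 0 < τ) (hγ : 0 < γ) (hn : 1 < n)
    (K : ℕ) (hK : 0 < K) :
    ((τ + (K : ℝ) * γ) ^ K -
        τ * (n - 1) * ((τ + (K : ℝ) * γ) ^ (K - 1) +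
          ∑ i ∈ Finset.Icc 1 (K - 1), ((K : ℝ) * γ) ^ (K - i) * (τ + (K : ℝ) * γ) ^ (i - 1)) =
      (τ + (K : ℝ) * γ) ^ K *
        (1 - (n - 1) * (1 - (((K : ℝ) * γ) / (τ + (K : ℝ) * γ)) ^ K))) ∧
    (((τ + (K : ℝ) * γ + 0) ^ K -
        τ * (n - 1) * ((τ + (K : ℝ) * γ + 0) ^ (K - 1) +
          ∑ i ∈ Finset.Icc 1 (K - 1), ((K : ℝ) * γ) ^ (K - i) * (τ + (K : ℝ) * γ + 0) ^ (i - 1))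
        = 0) ↔
      (n - 1) * (1 - (((K : ℝ) * γ) / (τ + (K : ℝ) * γ)) ^ K) = 1) := by
  set a : ℝ := τ + (K : ℝ) * γ with ha
  set b : ℝ := (K : ℝ) * γ with hb
  have hb0 : 0 < b := by positivity
  have ha0 : 0 < a := by positivity
  have hKγ : τ = a - b := by rw [ha, hb]; ring
  have hK1 : K - 1 + 1 = K := Nat.succ_pred_eq_of_pos hK
  -- the bracket equals the full geometric sum
  have hS : a ^ (K - 1) + ∑ i ∈ Finset.Icc 1 (K - 1), b ^ (K - i) * a ^ (i - 1)
      = ∑ j ∈ Finset.range K, a ^ j * b ^ (K - 1 - j) := by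
    have h1 : (∑ i ∈ Finset.Icc 1 K, b ^ (K - i) * a ^ (i - 1))
        = ∑ i ∈ Finset.Icc 1 (K - 1), b ^ (K - i) * a ^ (i - 1) + b ^ (K - K) * a ^ (K - 1) := by
      rw [← hK1]
      exact Finset.sum_Icc_succ_top (by omega) _
    have h2 : (∑ i ∈ Finset.Icc 1 K, b ^ (K - i) * a ^ (i - 1))
        = ∑ j ∈ Finset.range K, a ^ j * b ^ (K - 1 - j) := by
      rw [← Finset.Ico_add_one_right_eq_Icc, Finset.sum_Ico_eq_sum_range]
      apply Finset.sum_congr (by simp)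
      intro j hj
      simp only [Finset.mem_range] at hj
      have : K - (1 + j) = K - 1 - j := by omega
      rw [this, Nat.add_sub_cancel_left, mul_comm]
    rw [Nat.sub_self, pow_zero, one_mul] at h1
    linarith [h1, h2]
  have hgeom : τ * (a ^ (K - 1) + ∑ i ∈ Finset.Icc 1 (K - 1), b ^ (K - i) * a ^ (i - 1))
      = a ^ K - b ^ K := by
    rw [hS, hKγ, mul_comm]
    exact geom_sum₂_mul a b K
  have hmain : a ^ K - τ * (n - 1) * (a ^ (K - 1) +
        ∑ i ∈ Finset.Icc 1 (K - 1), b ^ (K - i) * a ^ (i - 1))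
      = a ^ K * (1 - (n - 1) * (1 - (b / a) ^ K)) := by
    have hdp : (b / a) ^ K = b ^ K / a ^ K := div_pow b a K
    have haK : a ^ K ≠ 0 := by positivity
    have : τ * (n - 1) * (a ^ (K - 1) +
        ∑ i ∈ Finset.Icc 1 (K - 1), b ^ (K - i) * a ^ (i - 1))
        = (n - 1) * (a ^ K - b ^ K) := by
      rw [mul_comm τ (n - 1), mul_assoc, hgeom]
    rw [this, hdp]
    field_simp
  constructor
  · exact hmain
  · rw [add_zero, hmain]
    have haK : (0:ℝ) < a ^ K := by positivity
    constructor
    · intro h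
      rcases mul_eq_zero.mp h with h' | h'
      · exact absurd h' (ne_of_gt haK)
      · linarith
    · intro h
      have : 1 - (n - 1) * (1 - (b / a) ^ K) = 0 := by linarith
      rw [this, mul_zero]
end

section
/- Let τ > 0, γ > 0, n > 1 be real numbers and K a positive integer, and define φ(λ) = (τ+Kγ+λ)^K − τ(n−1)[ (τ+Kγ+λ)^{K−1} + Σ_{i=1}^{K−1} (Kγ)^{K−i} (τ+Kγ+λ)^{i−1} ]. If (n−1)(1 − (Kγ/(τ+Kγ))^K) > 1, then there exists λ > 0 with φ(λ) = 0; that is, the characteristic equation of the linearised pairwise model has a positive real root, so the disease-free equilibrium is unstable and an epidemic outbreak occurs. -/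
set_option autoImplicit false

open Finset

/-- If the threshold parameter `R = (n-1)(1 - (Kγ/(τ+Kγ))^K)` exceeds one, then the
characteristic factor `φ` of the linearised closed pairwise SI^K R model has a positive
real root, so the disease-free equilibrium is unstable. -/
theorem outbreak_positive_root (τ γ n : ℝ) (hτ : 0 < τ) (hγ : 0 < γ) (hn : 1 < n)
    (K : ℕ) (hK : 0 < K)
    (hR : (n - 1) * (1 - (((K : ℝ) * γ) / (τ + (K : ℝ) * γ)) ^ K) > 1) :
    ∃ lam : ℝ, 0 < lam ∧
      (τ + (K : ℝ) * γ + lam) ^ K -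
        τ * (n - 1) * ((τ + (K : ℝ) * γ + lam) ^ (K - 1) +
          ∑ i ∈ Finset.Icc 1 (K - 1),
            ((K : ℝ) * γ) ^ (K - i) * (τ + (K : ℝ) * γ + lam) ^ (i - 1)) = 0 := by
  set y : ℝ := (K : ℝ) * γ with hy
  have hy0 : 0 < y := by positivity
  set f : ℝ → ℝ := fun lam =>
    (τ + y + lam) ^ K - τ * (n - 1) * ((τ + y + lam) ^ (K - 1) +
      ∑ i ∈ Finset.Icc 1 (K - 1), y ^ (K - i) * (τ + y + lam) ^ (i - 1)) with hf
  have hn1 : (0:ℝ) < n - 1 := by linarith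
  -- key identity for the bracket
  have key : ∀ z : ℝ, z ^ (K - 1) + ∑ i ∈ Finset.Icc 1 (K - 1), y ^ (K - i) * z ^ (i - 1)
      = ∑ i ∈ Finset.range K, z ^ i * y ^ (K - 1 - i) := by
    intro z
    have hsucc : K - 1 + 1 = K := by omega
    rw [← Finset.Ico_add_one_right_eq_Icc, hsucc, Finset.sum_Ico_eq_sum_range]
    obtain ⟨m, rfl⟩ : ∃ m, K = m + 1 := ⟨K - 1, (Nat.succ_pred_eq_of_pos hK).symm⟩
    rw [Finset.sum_range_succ]
    simp only [Nat.add_sub_cancel, Nat.succ_sub_one]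
    have : ∀ i ∈ Finset.range m, y ^ (m + 1 - (1 + i)) * z ^ (1 + i - 1)
        = z ^ i * y ^ (m - i) := by
      intro i hi
      have h1 : m + 1 - (1 + i) = m - i := by omega
      have h2 : 1 + i - 1 = i := by omega
      rw [h1, h2, mul_comm]
    rw [Finset.sum_congr rfl this]
    rw [Nat.sub_self, pow_zero, mul_one, add_comm]
  -- f 0 < 0
  have hx0 : (0:ℝ) < τ + y := by positivity
  have hgeom : (∑ i ∈ Finset.range K, (τ + y) ^ i * y ^ (K - 1 - i)) * ((τ + y) - y)
      = (τ + y) ^ K - y ^ K := geom_sum₂_mul (τ + y) y K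
  have hf0 : f 0 < 0 := by
    have h0 : f 0 = (τ + y) ^ K - (n - 1) * ((τ + y) ^ K - y ^ K) := by
      simp only [hf, add_zero]
      rw [key (τ + y)]
      have hτeq : (τ + y) - y = τ := by ring
      rw [hτeq] at hgeom
      rw [← hgeom]; ring
    rw [h0]
    have hRx : (n - 1) * ((τ + y) ^ K - y ^ K) > (τ + y) ^ K := by
      have hxK : (0:ℝ) < (τ + y) ^ K := by positivity
      have : (n - 1) * (1 - (y / (τ + y)) ^ K) > 1 := hR
      have hsplit : 1 - (y / (τ + y)) ^ K = ((τ + y) ^ K - y ^ K) / (τ + y) ^ K := by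
        field_simp
        rw [div_pow, sub_mul, div_mul_cancel₀ _ (ne_of_gt hxK)]; ring
      rw [hsplit, ← mul_div_assoc] at this
      have := (lt_div_iff₀ hxK).mp this
      linarith
    linarith
  -- f M > 0 for large M
  set C : ℝ := 1 + ∑ i ∈ Finset.Icc 1 (K - 1), y ^ (K - i) with hC
  have hCpos : 0 < C := by
    have : 0 ≤ ∑ i ∈ Finset.Icc 1 (K - 1), y ^ (K - i) :=
      Finset.sum_nonneg fun i _ => by positivity
    linarith
  set M : ℝ := 1 + τ * (n - 1) * C with hM
  have hM0 : 0 < M := by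
    have : 0 < τ * (n - 1) * C := by positivity
    linarith
  have hfM : 0 < f M := by
    set x : ℝ := τ + y + M with hxdef
    have hx1 : (1:ℝ) ≤ x := by
      have : 0 < τ * (n - 1) * C := by positivity
      simp only [hxdef, hM]; linarith
    have hxpos : (0:ℝ) < x := by linarith
    have hbr : (x ^ (K - 1) + ∑ i ∈ Finset.Icc 1 (K - 1), y ^ (K - i) * x ^ (i - 1))
        ≤ C * x ^ (K - 1) := by
      have hterm : ∀ i ∈ Finset.Icc 1 (K - 1),
          y ^ (K - i) * x ^ (i - 1) ≤ y ^ (K - i) * x ^ (K - 1) := by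
        intro i hi
        have hle : i - 1 ≤ K - 1 := by
          have := (Finset.mem_Icc.mp hi).2; omega
        exact mul_le_mul_of_nonneg_left (pow_le_pow_right₀ hx1 hle) (by positivity)
      have hsum := Finset.sum_le_sum hterm
      have : ∑ i ∈ Finset.Icc 1 (K - 1), y ^ (K - i) * x ^ (K - 1)
          = (∑ i ∈ Finset.Icc 1 (K - 1), y ^ (K - i)) * x ^ (K - 1) := by
        rw [Finset.sum_mul]
      rw [this] at hsum
      calc x ^ (K - 1) + ∑ i ∈ Finset.Icc 1 (K - 1), y ^ (K - i) * x ^ (i - 1)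
          ≤ x ^ (K - 1) + (∑ i ∈ Finset.Icc 1 (K - 1), y ^ (K - i)) * x ^ (K - 1) := by
            linarith
        _ = C * x ^ (K - 1) := by rw [hC]; ring
    have hxK : x ^ K = x * x ^ (K - 1) := by
      conv_lhs => rw [show K = (K - 1) + 1 by omega]
      rw [pow_succ]; ring
    have hxgt : τ * (n - 1) * C < x := by
      simp only [hxdef, hM]; linarith
    have hτn : 0 < τ * (n - 1) := mul_pos hτ hn1
    have h1 : τ * (n - 1) * (x ^ (K - 1)
        + ∑ i ∈ Finset.Icc 1 (K - 1), y ^ (K - i) * x ^ (i - 1))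
        ≤ τ * (n - 1) * (C * x ^ (K - 1)) :=
      mul_le_mul_of_nonneg_left hbr (le_of_lt hτn)
    have hxK1pos : 0 < x ^ (K - 1) := pow_pos hxpos _
    have h2 : τ * (n - 1) * (C * x ^ (K - 1)) < x * x ^ (K - 1) := by
      have := mul_lt_mul_of_pos_right hxgt hxK1pos
      calc τ * (n - 1) * (C * x ^ (K - 1)) = (τ * (n - 1) * C) * x ^ (K - 1) := by ring
        _ < x * x ^ (K - 1) := this
    simp only [hf]
    show 0 < x ^ K - τ * (n - 1) * (x ^ (K - 1)
      + ∑ i ∈ Finset.Icc 1 (K - 1), y ^ (K - i) * x ^ (i - 1))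
    rw [hxK]; linarith
  -- intermediate value theorem
  have hbase : Continuous fun lam : ℝ => τ + y + lam := continuous_const.add continuous_id
  have hcont : Continuous f := by
    apply Continuous.sub (hbase.pow K)
    apply Continuous.mul continuous_const
    exact (hbase.pow (K - 1)).add (continuous_finset_sum _ fun i _ =>
      continuous_const.mul (hbase.pow (i - 1)))
  have hIVT := intermediate_value_Ioo (le_of_lt hM0) hcont.continuousOn
  have h0mem : (0:ℝ) ∈ Set.Ioo (f 0) (f M) := ⟨hf0, hfM⟩
  obtain ⟨c, hc, hfc⟩ := hIVT h0mem
  exact ⟨c, hc.1, hfc⟩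
end

section
/- Let τ > 0, n > 1, N > 0 be real numbers, let W : [0,∞) → ℝ be continuous, and let S, SS : [0,∞) → ℝ be differentiable with S(t) > 0 for all t ≥ 0, satisfying S′(t) = −W(t) and SS′(t) = −2·((n−1)/n)·SS(t)·W(t)/S(t) for all t ≥ 0, with S(0) = N and SS(0) = n·N. Then for all t ≥ 0, SS(t)/S(t) = n·(S(t)/N)^{(n−2)/n}; equivalently, SS(t) = n·S(t)^{2a}/N^{a−1/n} where a = (n−1)/n. In particular, if S(t) → S_∞ and SS(t) → SS_∞ as t → ∞, then SS_∞ = n·S_∞^{2a}/N^{a−1/n}. -/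
set_option autoImplicit false

open Filter Set

/-- Conservation law for the pairwise model: if `S' = -W` and
`SS' = -2((n-1)/n)·SS·W/S` on `[0,∞)` with `S(0) = N` and `SS(0) = nN`, then
`SS/S = n (S/N)^{(n-2)/n}` for all times, equivalently `SS = n S^{2a}/N^{a-1/n}` with
`a = (n-1)/n`; in particular the same relation holds for the limits as `t → ∞`. -/
theorem pairwise_SS_relation (τ n N a : ℝ) (hτ : 0 < τ) (hn : 1 < n) (hN : 0 < N)
    (ha : a = (n - 1) / n)
    (W S SS : ℝ → ℝ)
    (hW : ContinuousOn W (Set.Ici 0))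
    (hSpos : ∀ t ≥ (0 : ℝ), 0 < S t)
    (hS : ∀ t ≥ (0 : ℝ), HasDerivWithinAt S (-(W t)) (Set.Ici 0) t)
    (hSS : ∀ t ≥ (0 : ℝ),
      HasDerivWithinAt SS (-(2 * ((n - 1) / n) * SS t * W t / S t)) (Set.Ici 0) t)
    (hS0 : S 0 = N) (hSS0 : SS 0 = n * N) :
    (∀ t ≥ (0 : ℝ), SS t / S t = n * (S t / N) ^ ((n - 2) / n)) ∧
    (∀ t ≥ (0 : ℝ), SS t = n * S t ^ (2 * a) / N ^ (a - 1 / n)) ∧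
    (∀ Sinf SSinf : ℝ, Tendsto S atTop (nhds Sinf) → Tendsto SS atTop (nhds SSinf) →
      SSinf = n * Sinf ^ (2 * a) / N ^ (a - 1 / n)) := by
  have hn0 : (0 : ℝ) < n := lt_trans one_pos hn
  have ha2 : 2 * a = 2 * (n - 1) / n := by rw [ha]; ring
  -- F = SS * S^(-2a) is constant
  set p : ℝ := -(2 * a) with hp
  have hF : ∀ t ≥ (0 : ℝ), SS t * S t ^ p = SS 0 * S 0 ^ p := by
    intro t ht
    have hcont : ContinuousOn (fun x => SS x * S x ^ p) (Icc 0 t) := by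
      apply ContinuousOn.mono _ (Icc_subset_Ici_self)
      intro x hx
      exact ((hSS x hx).continuousWithinAt.mul
        ((hS x hx).continuousWithinAt.rpow_const (Or.inl (hSpos x hx).ne')))
    have hderiv : ∀ x ∈ Ico (0:ℝ) t,
        HasDerivWithinAt (fun x => SS x * S x ^ p) 0 (Ici x) x := by
      intro x hx
      have hx0 : (0:ℝ) ≤ x := hx.1
      have hSx := (hS x hx0).mono (Ici_subset_Ici.2 hx0)
      have hSSx := (hSS x hx0).mono (Ici_subset_Ici.2 hx0)
      have hSxpos := hSpos x hx0
      have hpow := hSx.rpow_const (p := p) (Or.inl hSxpos.ne')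
      have := hSSx.mul hpow
      convert this using 1
      case e'_4 => rfl
      case e'_5 => rfl
      case e'_8 => rfl
      have h1 : S x ^ (p - 1) = S x ^ p / S x := by
        rw [Real.rpow_sub hSxpos, Real.rpow_one]
      rw [h1, hp, ha]
      field_simp
      ring
    exact (constant_of_has_deriv_right_zero hcont hderiv t (right_mem_Icc.2 ht))
  have hC : SS 0 * S 0 ^ p = n * N ^ (1 - 2 * a) := by
    rw [hS0, hSS0, hp, Real.rpow_neg hN.le, Real.rpow_sub hN, Real.rpow_one]
    field_simp
  -- key exponent identities
  have hexp1 : a - 1 / n = (n - 2) / n := by rw [ha]; field_simp; ring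
  have hexp2 : 1 - 2 * a = -((n - 2) / n) := by rw [ha]; field_simp; ring
  have key : ∀ t ≥ (0 : ℝ), SS t = n * S t ^ (2 * a) / N ^ (a - 1 / n) := by
    intro t ht
    have h := (hF t ht).trans hC
    have hSt := hSpos t ht
    have hSp : S t ^ p = (S t ^ (2 * a))⁻¹ := by
      rw [hp, Real.rpow_neg hSt.le]
    have hNp : N ^ (1 - 2 * a) = (N ^ (a - 1 / n))⁻¹ := by
      rw [hexp2, ← hexp1, Real.rpow_neg hN.le]
    rw [hSp, hNp] at h
    have h2a : (0:ℝ) < S t ^ (2 * a) := Real.rpow_pos_of_pos hSt _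
    have hNpos : (0:ℝ) < N ^ (a - 1 / n) := Real.rpow_pos_of_pos hN _
    field_simp at h ⊢
    linarith [h]
  refine ⟨?_, key, ?_⟩
  · intro t ht
    have hSt := hSpos t ht
    rw [key t ht, Real.div_rpow hSt.le hN.le, ← hexp1]
    have : S t ^ (a - 1/n) = S t ^ (2 * a) / S t := by
      have : a - 1/n = 2 * a - 1 := by rw [ha]; field_simp; ring
      rw [this, Real.rpow_sub hSt, Real.rpow_one]
    rw [this]
    field_simp
  · intro Sinf SSinf hS1 hS2
    have h2apos : (0:ℝ) < 2 * a := by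
      rw [ha]
      have h1 : (0:ℝ) < n - 1 := by linarith
      positivity
    have hev : ∀ᶠ t in atTop, SS t = n * S t ^ (2 * a) / N ^ (a - 1 / n) :=
      (eventually_ge_atTop (0:ℝ)).mono fun t ht => key t ht
    have hrpow : Tendsto (fun t => S t ^ (2 * a)) atTop (nhds (Sinf ^ (2 * a))) := by
      exact (Real.continuousAt_rpow_const Sinf (2*a) (Or.inr h2apos.le)).tendsto.comp hS1
    have hrhs : Tendsto (fun t => n * S t ^ (2 * a) / N ^ (a - 1 / n)) atTop
        (nhds (n * Sinf ^ (2 * a) / N ^ (a - 1 / n))) := by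
      exact ((hrpow.const_mul n).div_const _)
    exact tendsto_nhds_unique (hS2.congr' hev) hrhs
end

section
/- Consider the closed pairwise SI^KR model with parameters τ, γ > 0, integer K ≥ 1, real n > 1, a = (n−1)/n, given by differentiable functions S, SS, SI₁, …, SI_K : [0,∞) → ℝ with S(t) > 0 satisfying S′ = −τ Σᵢ SIᵢ, SS′ = −2τa·SS·(Σᵢ SIᵢ)/S, SI₁′ = −(τ+Kγ)SI₁ + τa(SS − SI₁)(Σᵢ SIᵢ)/S, and SIⱼ′ = −(τ+Kγ)SIⱼ + Kγ·SI_{j−1} − τa·SIⱼ·(Σᵢ SIᵢ)/S for j = 2, …, K. Then the scaled variables Pᵢ(t) = SIᵢ(t)/S(t)^a satisfy, for all t ≥ 0, P₁′ = −(τ+Kγ)P₁ + aτ·(SS/S)·F and Pⱼ′ = −(τ+Kγ)Pⱼ + Kγ·P_{j−1} for j = 2, …, K, where F(t) = (Σᵢ SIᵢ(t))/S(t)^a. -/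
set_option autoImplicit false

open Finset Set

lemma scaled_deriv_aux {S X : ℝ → ℝ} {t a s' x' : ℝ} (hSt : 0 < S t)
    (hS : HasDerivWithinAt S s' (Set.Ici 0) t)
    (hX : HasDerivWithinAt X x' (Set.Ici 0) t) :
    HasDerivWithinAt (fun u => X u / S u ^ a)
      ((x' * S t ^ a - X t * (s' * a * S t ^ (a - 1))) / (S t ^ a) ^ 2)
      (Set.Ici 0) t :=
  hX.div (hS.rpow_const (Or.inl hSt.ne')) (Real.rpow_pos_of_pos hSt a).ne'

/-- In the closed pairwise SI^K R model, the scaled variables `Pᵢ = SIᵢ / S^a` satisfy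
`P₁' = -(τ+Kγ)P₁ + aτ(SS/S)F` and `Pⱼ' = -(τ+Kγ)Pⱼ + Kγ P_{j-1}` for `j = 2, …, K`,
where `F = (Σᵢ SIᵢ)/S^a`. -/
theorem pairwise_scaled_variables (τ γ n a : ℝ) (hτ : 0 < τ) (hγ : 0 < γ) (hn : 1 < n)
    (ha : a = (n - 1) / n) (K : ℕ) (hK : 1 ≤ K)
    (S SS : ℝ → ℝ) (SI : ℕ → ℝ → ℝ)
    (hSpos : ∀ t ≥ (0 : ℝ), 0 < S t)
    (hS : ∀ t ≥ (0 : ℝ),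
      HasDerivWithinAt S (-(τ * ∑ i ∈ Finset.Icc 1 K, SI i t)) (Set.Ici 0) t)
    (hSS : ∀ t ≥ (0 : ℝ),
      HasDerivWithinAt SS
        (-(2 * τ * a * SS t * (∑ i ∈ Finset.Icc 1 K, SI i t) / S t)) (Set.Ici 0) t)
    (hSI1 : ∀ t ≥ (0 : ℝ),
      HasDerivWithinAt (SI 1)
        (-(τ + (K : ℝ) * γ) * SI 1 t +
          τ * a * (SS t - SI 1 t) * (∑ i ∈ Finset.Icc 1 K, SI i t) / S t) (Set.Ici 0) t)
    (hSIj : ∀ j, 2 ≤ j → j ≤ K → ∀ t ≥ (0 : ℝ),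
      HasDerivWithinAt (SI j)
        (-(τ + (K : ℝ) * γ) * SI j t + (K : ℝ) * γ * SI (j - 1) t -
          τ * a * SI j t * (∑ i ∈ Finset.Icc 1 K, SI i t) / S t) (Set.Ici 0) t) :
    (∀ t ≥ (0 : ℝ),
      HasDerivWithinAt (fun u => SI 1 u / S u ^ a)
        (-(τ + (K : ℝ) * γ) * (SI 1 t / S t ^ a) +
          a * τ * (SS t / S t) * ((∑ i ∈ Finset.Icc 1 K, SI i t) / S t ^ a))
        (Set.Ici 0) t) ∧
    (∀ j, 2 ≤ j → j ≤ K → ∀ t ≥ (0 : ℝ),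
      HasDerivWithinAt (fun u => SI j u / S u ^ a)
        (-(τ + (K : ℝ) * γ) * (SI j t / S t ^ a) +
          (K : ℝ) * γ * (SI (j - 1) t / S t ^ a))
        (Set.Ici 0) t) := by
  constructor
  · intro t ht
    have hSt := hSpos t ht
    have hP : (0:ℝ) < S t ^ a := Real.rpow_pos_of_pos hSt a
    have h1 : S t ^ (a - 1) = S t ^ a / S t := Real.rpow_sub_one hSt.ne' a
    have := scaled_deriv_aux (a := a) hSt (hS t ht) (hSI1 t ht)
    convert this using 1
    rw [h1]
    field_simp
    ring
  · intro j hj2 hjK t ht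
    have hSt := hSpos t ht
    have hP : (0:ℝ) < S t ^ a := Real.rpow_pos_of_pos hSt a
    have h1 : S t ^ (a - 1) = S t ^ a / S t := Real.rpow_sub_one hSt.ne' a
    have := scaled_deriv_aux (a := a) hSt (hS t ht) (hSIj j hj2 hjK t ht)
    convert this using 1
    rw [h1]
    field_simp
    ring
end

section
/- Consider the closed pairwise SI^KR model with parameters τ, γ > 0, integer K ≥ 1, real n > 1, a = (n−1)/n, given by differentiable functions S, SS, SI₁, …, SI_K : [0,∞) → ℝ with S(t) > 0 satisfying S′ = −τ Σᵢ SIᵢ, SS′ = −2τa·SS·(Σᵢ SIᵢ)/S, SI₁′ = −(τ+Kγ)SI₁ + τa(SS − SI₁)(Σᵢ SIᵢ)/S, and SIⱼ′ = −(τ+Kγ)SIⱼ + Kγ·SI_{j−1} − τa·SIⱼ·(Σᵢ SIᵢ)/S for j = 2, …, K. Suppose additionally that SR : [0,∞) → ℝ is differentiable with SR′ = −τa·SR·(Σᵢ SIᵢ)/S + Kγ·SI_K. Then F(t) = (Σᵢ SIᵢ(t))/S(t)^a and G(t) = SR(t)/S(t)^a satisfy, for all t ≥ 0, F′ = −τF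 − Kγ·P_K + aτ·(SS/S)·F and G′ = Kγ·P_K, where P_K(t) = SI_K(t)/S(t)^a. -/
set_option autoImplicit false

open Finset Set

/-- In the closed pairwise SI^K R model with an SR-pair equation, the scaled variables
`F = (Σᵢ SIᵢ)/S^a` and `G = SR/S^a` satisfy `F' = -τF - Kγ P_K + aτ(SS/S)F` and
`G' = Kγ P_K`, where `P_K = SI_K / S^a`. -/
theorem pairwise_F_G_equations (τ γ n a : ℝ) (hτ : 0 < τ) (hγ : 0 < γ) (hn : 1 < n)
    (ha : a = (n - 1) / n) (K : ℕ) (hK : 1 ≤ K)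
    (S SS SR : ℝ → ℝ) (SI : ℕ → ℝ → ℝ)
    (hSpos : ∀ t ≥ (0 : ℝ), 0 < S t)
    (hS : ∀ t ≥ (0 : ℝ),
      HasDerivWithinAt S (-(τ * ∑ i ∈ Finset.Icc 1 K, SI i t)) (Set.Ici 0) t)
    (hSS : ∀ t ≥ (0 : ℝ),
      HasDerivWithinAt SS
        (-(2 * τ * a * SS t * (∑ i ∈ Finset.Icc 1 K, SI i t) / S t)) (Set.Ici 0) t)
    (hSI1 : ∀ t ≥ (0 : ℝ),
      HasDerivWithinAt (SI 1)
        (-(τ + (K : ℝ) * γ) * SI 1 t +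
          τ * a * (SS t - SI 1 t) * (∑ i ∈ Finset.Icc 1 K, SI i t) / S t) (Set.Ici 0) t)
    (hSIj : ∀ j, 2 ≤ j → j ≤ K → ∀ t ≥ (0 : ℝ),
      HasDerivWithinAt (SI j)
        (-(τ + (K : ℝ) * γ) * SI j t + (K : ℝ) * γ * SI (j - 1) t -
          τ * a * SI j t * (∑ i ∈ Finset.Icc 1 K, SI i t) / S t) (Set.Ici 0) t)
    (hSR : ∀ t ≥ (0 : ℝ),
      HasDerivWithinAt SR
        (-(τ * a * SR t * (∑ i ∈ Finset.Icc 1 K, SI i t) / S t) + (K : ℝ) * γ * SI K t)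
        (Set.Ici 0) t) :
    (∀ t ≥ (0 : ℝ),
      HasDerivWithinAt (fun u => (∑ i ∈ Finset.Icc 1 K, SI i u) / S u ^ a)
        (-τ * ((∑ i ∈ Finset.Icc 1 K, SI i t) / S t ^ a) -
          (K : ℝ) * γ * (SI K t / S t ^ a) +
          a * τ * (SS t / S t) * ((∑ i ∈ Finset.Icc 1 K, SI i t) / S t ^ a))
        (Set.Ici 0) t) ∧
    (∀ t ≥ (0 : ℝ),
      HasDerivWithinAt (fun u => SR u / S u ^ a)
        ((K : ℝ) * γ * (SI K t / S t ^ a)) (Set.Ici 0) t) := by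

  have hIsum : ∀ t ≥ (0 : ℝ),
      HasDerivWithinAt (fun u => ∑ i ∈ Finset.Icc 1 K, SI i u)
        (-τ * (∑ i ∈ Finset.Icc 1 K, SI i t)
          - (K : ℝ) * γ * SI K t
          + τ * a * SS t * (∑ i ∈ Finset.Icc 1 K, SI i t) / S t
          - τ * a * (∑ i ∈ Finset.Icc 1 K, SI i t)
              * (∑ i ∈ Finset.Icc 1 K, SI i t) / S t) (Set.Ici 0) t := by
    intro t ht
    set It := ∑ i ∈ Finset.Icc 1 K, SI i t with hIt
    have hd : ∀ i ∈ Finset.Icc 1 K,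
        HasDerivWithinAt (SI i)
          (if i = 1 then
            -(τ + (K : ℝ) * γ) * SI 1 t + τ * a * (SS t - SI 1 t) * It / S t
          else
            -(τ + (K : ℝ) * γ) * SI i t + (K : ℝ) * γ * SI (i - 1) t
              - τ * a * SI i t * It / S t) (Set.Ici 0) t := by
      intro i hi
      simp only [Finset.mem_Icc] at hi
      by_cases h1 : i = 1
      · subst h1; simpa using hSI1 t ht
      · have h2 : 2 ≤ i := by omega
        simp only [if_neg h1]
        exact hSIj i h2 hi.2 t ht
    have hsum := HasDerivWithinAt.sum hd
    have hshift : ∑ j ∈ Finset.Icc 2 K, SI (j - 1) t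
        = ∑ j ∈ Finset.Icc 1 (K - 1), SI j t := by
      rw [show (2 : ℕ) = 1 + 1 from rfl, show K = (K - 1) + 1 by omega]
      rw [← Finset.map_add_right_Icc 1 (K - 1) 1, Finset.sum_map]
      simp
    have htail : ∑ j ∈ Finset.Icc 1 (K - 1), SI j t = It - SI K t := by
      have : Finset.Icc 1 K = insert K (Finset.Icc 1 (K - 1)) := by
        ext x; simp [Finset.mem_Icc, Finset.mem_insert]; omega
      rw [hIt, this, Finset.sum_insert (by simp [Finset.mem_Icc]; omega)]
      ring
    have hsplit : Finset.Icc 1 K = insert 1 (Finset.Icc 2 K) := by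
      ext x; simp [Finset.mem_Icc, Finset.mem_insert]; omega
    rw [Finset.sum_fn] at hsum
    refine hsum.congr_deriv ?_
    symm
    rw [hsplit, Finset.sum_insert (by simp [Finset.mem_Icc])]
    rw [if_pos rfl]
    have : ∑ i ∈ Finset.Icc 2 K, (if i = 1 then
            -(τ + (K : ℝ) * γ) * SI 1 t + τ * a * (SS t - SI 1 t) * It / S t
          else
            -(τ + (K : ℝ) * γ) * SI i t + (K : ℝ) * γ * SI (i - 1) t
              - τ * a * SI i t * It / S t)
        = ∑ i ∈ Finset.Icc 2 K, (-(τ + (K : ℝ) * γ) * SI i t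
            + (K : ℝ) * γ * SI (i - 1) t - τ * a * SI i t * It / S t) := by
      refine Finset.sum_congr rfl fun i hi => ?_
      simp only [Finset.mem_Icc] at hi
      rw [if_neg (by omega)]
    have hI2 : ∑ i ∈ Finset.Icc 2 K, SI i t = It - SI 1 t := by
      rw [hIt, hsplit, Finset.sum_insert (by simp [Finset.mem_Icc])]; ring
    have hA : ∑ x ∈ Finset.Icc 2 K, -(τ + (K : ℝ) * γ) * SI x t
        = -(τ + (K : ℝ) * γ) * (It - SI 1 t) := by
      rw [← Finset.mul_sum, hI2]
    have hB : ∑ x ∈ Finset.Icc 2 K, (K : ℝ) * γ * SI (x - 1) t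
        = (K : ℝ) * γ * (It - SI K t) := by
      rw [← Finset.mul_sum, hshift, htail]
    have hC : ∑ i ∈ Finset.Icc 2 K, τ * a * SI i t * It / S t
        = τ * a * ((It - SI 1 t) * It / S t) := by
      rw [← hI2, Finset.sum_mul, Finset.sum_div, Finset.mul_sum]
      exact Finset.sum_congr rfl fun i _ => by ring
    rw [this, Finset.sum_sub_distrib, Finset.sum_add_distrib, hA, hB, hC]
    field_simp
    ring
  have hSa : ∀ t ≥ (0 : ℝ),
      HasDerivWithinAt (fun u => S u ^ a)
        (-(τ * ∑ i ∈ Finset.Icc 1 K, SI i t) * a * S t ^ (a - 1)) (Set.Ici 0) t := by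
    intro t ht
    exact (hS t ht).rpow_const (Or.inl (hSpos t ht).ne')
  constructor
  · intro t ht
    have hS0 : S t ≠ 0 := (hSpos t ht).ne'
    have hSa0 : S t ^ a ≠ 0 := (Real.rpow_pos_of_pos (hSpos t ht) a).ne'
    have h := (hIsum t ht).div (hSa t ht) hSa0
    refine h.congr_deriv ?_
    symm
    have hsub : S t ^ (a - 1) = S t ^ a / S t := by
      rw [Real.rpow_sub (hSpos t ht), Real.rpow_one]
    rw [hsub]
    field_simp
    ring
  · intro t ht
    have hS0 : S t ≠ 0 := (hSpos t ht).ne'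
    have hSa0 : S t ^ a ≠ 0 := (Real.rpow_pos_of_pos (hSpos t ht) a).ne'
    have h := (hSR t ht).div (hSa t ht) hSa0
    refine h.congr_deriv ?_
    symm
    have hsub : S t ^ (a - 1) = S t ^ a / S t := by
      rw [Real.rpow_sub (hSpos t ht), Real.rpow_one]
    rw [hsub]
    field_simp
    ring
end

section
/- Consider the closed pairwise SI^KR model with parameters τ, γ > 0, integer K ≥ 1, real n > 1, a = (n−1)/n, given by differentiable functions S, SS, SI₁, …, SI_K : [0,∞) → ℝ with S(t) > 0 and SS(t) > 0 satisfying S′ = −τ Σᵢ SIᵢ and SS′ = −2τa·SS·(Σᵢ SIᵢ)/S. Then the quantity L(t) = SS(t)/( exp(n·S(t)^{1/n}) · S(t)^{2a} ) satisfies, for all t ≥ 0, L′(t) = τ·F(t)·L(t), where F(t) = (Σᵢ SIᵢ(t))/S(t)^a; equivalently, (d/dt) log L(t) = τ·F(t). -/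
set_option autoImplicit false

open Finset Set Real

/-- In the closed pairwise SI^K R model, the quantity
`L = SS / (exp (n S^{1/n}) S^{2a})` satisfies `L' = τ F L`, where
`F = (Σᵢ SIᵢ)/S^a`; equivalently `(log L)' = τ F`. -/
theorem pairwise_L_equation (τ γ n a : ℝ) (hτ : 0 < τ) (hγ : 0 < γ) (hn : 1 < n)
    (ha : a = (n - 1) / n) (K : ℕ) (hK : 1 ≤ K)
    (S SS : ℝ → ℝ) (SI : ℕ → ℝ → ℝ)
    (hSpos : ∀ t ≥ (0 : ℝ), 0 < S t)
    (hSSpos : ∀ t ≥ (0 : ℝ), 0 < SS t)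
    (hS : ∀ t ≥ (0 : ℝ),
      HasDerivWithinAt S (-(τ * ∑ i ∈ Finset.Icc 1 K, SI i t)) (Set.Ici 0) t)
    (hSS : ∀ t ≥ (0 : ℝ),
      HasDerivWithinAt SS
        (-(2 * τ * a * SS t * (∑ i ∈ Finset.Icc 1 K, SI i t) / S t)) (Set.Ici 0) t) :
    (∀ t ≥ (0 : ℝ),
      HasDerivWithinAt (fun u => SS u / (Real.exp (n * S u ^ (1 / n)) * S u ^ (2 * a)))
        (τ * ((∑ i ∈ Finset.Icc 1 K, SI i t) / S t ^ a) *
          (SS t / (Real.exp (n * S t ^ (1 / n)) * S t ^ (2 * a))))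
        (Set.Ici 0) t) ∧
    (∀ t ≥ (0 : ℝ),
      HasDerivWithinAt
        (fun u => Real.log (SS u / (Real.exp (n * S u ^ (1 / n)) * S u ^ (2 * a))))
        (τ * ((∑ i ∈ Finset.Icc 1 K, SI i t) / S t ^ a)) (Set.Ici 0) t) := by
  have hn0 : n ≠ 0 := by linarith
  have hL : ∀ t ≥ (0 : ℝ),
      HasDerivWithinAt (fun u => SS u / (Real.exp (n * S u ^ (1 / n)) * S u ^ (2 * a)))
        (τ * ((∑ i ∈ Finset.Icc 1 K, SI i t) / S t ^ a) *
          (SS t / (Real.exp (n * S t ^ (1 / n)) * S t ^ (2 * a))))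
        (Set.Ici 0) t := by
    intro t ht
    have hx := hSpos t ht
    have hxne : S t ≠ 0 := ne_of_gt hx
    have hSd := hS t ht
    have h1 : HasDerivWithinAt (fun u => S u ^ (1 / n))
        (-(τ * ∑ i ∈ Finset.Icc 1 K, SI i t) * (1 / n) * S t ^ (1 / n - 1))
        (Set.Ici 0) t := hSd.rpow_const (Or.inl hxne)
    have h2 := (h1.const_mul n).exp
    have h4 : HasDerivWithinAt (fun u => S u ^ (2 * a))
        (-(τ * ∑ i ∈ Finset.Icc 1 K, SI i t) * (2 * a) * S t ^ (2 * a - 1))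
        (Set.Ici 0) t := hSd.rpow_const (Or.inl hxne)
    have hD := h2.mul h4
    have hE : (0 : ℝ) < Real.exp (n * S t ^ (1 / n)) := Real.exp_pos _
    have hP : (0 : ℝ) < S t ^ (2 * a) := Real.rpow_pos_of_pos hx _
    have hDne : Real.exp (n * S t ^ (1 / n)) * S t ^ (2 * a) ≠ 0 := by positivity
    have hLd := (hSS t ht).div hD hDne
    refine hLd.congr_deriv ?_
    symm
    have hq : (0 : ℝ) < S t ^ (1 / n) := Real.rpow_pos_of_pos hx _
    have e1 : S t ^ (1 / n - 1) = S t ^ (1 / n) / S t := by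
      rw [Real.rpow_sub hx, Real.rpow_one]
    have e2 : S t ^ (2 * a - 1) = S t ^ (2 * a) / S t := by
      rw [Real.rpow_sub hx, Real.rpow_one]
    have ha' : a = 1 - 1 / n := by rw [ha]; field_simp
    have e3 : S t ^ a = S t / S t ^ (1 / n) := by
      rw [ha', Real.rpow_sub hx, Real.rpow_one]
    simp only [Pi.mul_apply]
    rw [e1, e2, e3]
    field_simp
    ring
  refine ⟨hL, fun t ht => ?_⟩
  have hx := hSpos t ht
  have hE : (0 : ℝ) < Real.exp (n * S t ^ (1 / n)) := Real.exp_pos _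
  have hP : (0 : ℝ) < S t ^ (2 * a) := Real.rpow_pos_of_pos hx _
  have hLpos : 0 < SS t / (Real.exp (n * S t ^ (1 / n)) * S t ^ (2 * a)) := by
    have := hSSpos t ht; positivity
  have hlog := (hL t ht).log (ne_of_gt hLpos)
  convert hlog using 1
  rw [mul_div_assoc, div_self (ne_of_gt hLpos), mul_one]
end

section
/- Consider the closed pairwise SI^KR model with parameters τ, γ > 0, integer K ≥ 1, real n > 1, a = (n−1)/n, given by differentiable functions S, SS, SI₁, …, SI_K, SR : [0,∞) → ℝ with S(t) > 0 satisfying S′ = −τ Σᵢ SIᵢ, SS′ = −2τa·SS·(Σᵢ SIᵢ)/S, SI₁′ = −(τ+Kγ)SI₁ + τa(SS − SI₁)(Σᵢ SIᵢ)/S, SIⱼ′ = −(τ+Kγ)SIⱼ + Kγ·SI_{j−1} − τa·SIⱼ·(Σᵢ SIᵢ)/S for j = 2, …, K, and SR′ = −τa·SR·(Σᵢ SIᵢ)/S + Kγ·SI_K. Assume SIᵢ(0) = 0 for all i, SR(0) = 0, each SIᵢ(t)/S(t)^a is integrable on [0,∞) and tends to 0 as t → ∞, t ↦ SS(t)(Σᵢ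 SIᵢ(t))/S(t)^{1+a} is integrable on [0,∞), S(t) → S_∞ > 0, SS(t) → SS_∞, and SR(t) → SR_∞ as t → ∞. Then SR_∞ / S_∞^a = (1 − τ̃) · ( SS(0)/S(0)^a − SS_∞/S_∞^a ), where τ̃ = 1 − (Kγ/(τ + Kγ))^K. -/
set_option autoImplicit false

open Finset Set MeasureTheory Filter

lemma aux_deriv (S X : ℝ → ℝ) (a c X' t : ℝ)
    (hpos : 0 < S t) (hS : HasDerivWithinAt S c (Set.Ici 0) t)
    (hX : HasDerivWithinAt X X' (Set.Ici 0) t) :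
    HasDerivWithinAt (fun u => X u / S u ^ a)
      ((X' * S t - a * X t * c) / S t ^ (1 + a)) (Set.Ici 0) t := by
  have hne : S t ≠ 0 := hpos.ne'
  have hpa : (0:ℝ) < S t ^ a := Real.rpow_pos_of_pos hpos a
  have hrp : HasDerivWithinAt (fun u => S u ^ a) (a * S t ^ (a - 1) * c) (Set.Ici 0) t := by
    exact (Real.hasDerivAt_rpow_const (p := a) (Or.inl hne)).comp_hasDerivWithinAt t hS
  have h := hX.div hrp hpa.ne'
  refine h.congr_deriv ?_
  have e1 : S t ^ (a - 1) = S t ^ a / S t := by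
    rw [Real.rpow_sub hpos, Real.rpow_one]
  have e2 : S t ^ (1 + a) = S t * S t ^ a := by
    rw [Real.rpow_add hpos, Real.rpow_one]
  rw [e1, e2]
  field_simp

lemma aux_ftc (F D : ℝ → ℝ) (m : ℝ)
    (hd : ∀ t ≥ (0:ℝ), HasDerivWithinAt F (D t) (Set.Ici 0) t)
    (hint : IntegrableOn D (Set.Ici 0))
    (hlim : Tendsto F atTop (nhds m)) :
    ∫ t in Set.Ioi (0:ℝ), D t = m - F 0 := by
  apply MeasureTheory.integral_Ioi_of_hasDerivAt_of_tendsto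
  · exact (hd 0 le_rfl).continuousWithinAt
  · intro x hx
    exact ((hd x hx.le).hasDerivAt (Ici_mem_nhds hx))
  · exact hint.mono_set Set.Ioi_subset_Ici_self
  · exact hlim

/-- Final value of the scaled susceptible–recovered pairs in the closed pairwise
SI^K R model: with `τ̃ = 1 - (Kγ/(τ+Kγ))^K`, burn-out of the epidemic gives
`SR_∞ / S_∞^a = (1 - τ̃) (SS(0)/S(0)^a - SS_∞/S_∞^a)`. -/
theorem pairwise_SR_infinity (τ γ n a : ℝ) (hτ : 0 < τ) (hγ : 0 < γ) (hn : 1 < n)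
    (ha : a = (n - 1) / n) (K : ℕ) (hK : 1 ≤ K)
    (S SS SR : ℝ → ℝ) (SI : ℕ → ℝ → ℝ)
    (Sinf SSinf SRinf : ℝ)
    (hSpos : ∀ t ≥ (0 : ℝ), 0 < S t)
    (hS : ∀ t ≥ (0 : ℝ),
      HasDerivWithinAt S (-(τ * ∑ i ∈ Finset.Icc 1 K, SI i t)) (Set.Ici 0) t)
    (hSS : ∀ t ≥ (0 : ℝ),
      HasDerivWithinAt SS
        (-(2 * τ * a * SS t * (∑ i ∈ Finset.Icc 1 K, SI i t) / S t)) (Set.Ici 0) t)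
    (hSI1 : ∀ t ≥ (0 : ℝ),
      HasDerivWithinAt (SI 1)
        (-(τ + (K : ℝ) * γ) * SI 1 t +
          τ * a * (SS t - SI 1 t) * (∑ i ∈ Finset.Icc 1 K, SI i t) / S t) (Set.Ici 0) t)
    (hSIj : ∀ j, 2 ≤ j → j ≤ K → ∀ t ≥ (0 : ℝ),
      HasDerivWithinAt (SI j)
        (-(τ + (K : ℝ) * γ) * SI j t + (K : ℝ) * γ * SI (j - 1) t -
          τ * a * SI j t * (∑ i ∈ Finset.Icc 1 K, SI i t) / S t) (Set.Ici 0) t)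
    (hSR : ∀ t ≥ (0 : ℝ),
      HasDerivWithinAt SR
        (-(τ * a * SR t * (∑ i ∈ Finset.Icc 1 K, SI i t) / S t) + (K : ℝ) * γ * SI K t)
        (Set.Ici 0) t)
    (hSI0 : ∀ i, 1 ≤ i → i ≤ K → SI i 0 = 0)
    (hSR0 : SR 0 = 0)
    (hPint : ∀ i, 1 ≤ i → i ≤ K →
      IntegrableOn (fun t => SI i t / S t ^ a) (Set.Ici 0))
    (hPlim : ∀ i, 1 ≤ i → i ≤ K →
      Tendsto (fun t => SI i t / S t ^ a) atTop (nhds 0))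
    (hWint : IntegrableOn
      (fun t => SS t * (∑ i ∈ Finset.Icc 1 K, SI i t) / S t ^ (1 + a)) (Set.Ici 0))
    (hSlim : Tendsto S atTop (nhds Sinf)) (hSinf : 0 < Sinf)
    (hSSlim : Tendsto SS atTop (nhds SSinf))
    (hSRlim : Tendsto SR atTop (nhds SRinf)) :
    SRinf / Sinf ^ a =
      (1 - (1 - (((K : ℝ) * γ) / (τ + (K : ℝ) * γ)) ^ K)) *
        (SS 0 / S 0 ^ a - SSinf / Sinf ^ a) := by
  have hg : (0:ℝ) < τ + (K : ℝ) * γ := by positivity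
  set Q : ℝ → ℝ := fun t => ∑ i ∈ Finset.Icc 1 K, SI i t with hQdef
  set W : ℝ → ℝ := fun t => SS t * Q t / S t ^ (1 + a) with hWdef
  set P : ℕ → ℝ → ℝ := fun i t => SI i t / S t ^ a with hPdef
  set M : ℝ → ℝ := fun t => SS t / S t ^ a with hMdef
  set N : ℝ → ℝ := fun t => SR t / S t ^ a with hNdef
  set Minf : ℝ := SSinf / Sinf ^ a with hMinfdef
  set Ninf : ℝ := SRinf / Sinf ^ a with hNinfdef
  -- limits
  have hSa : Tendsto (fun t => S t ^ a) atTop (nhds (Sinf ^ a)) :=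
    hSlim.rpow_const (Or.inl hSinf.ne')
  have hSane : (Sinf : ℝ) ^ a ≠ 0 := (Real.rpow_pos_of_pos hSinf a).ne'
  have hMlim : Tendsto M atTop (nhds Minf) := hSSlim.div hSa hSane
  have hNlim : Tendsto N atTop (nhds Ninf) := hSRlim.div hSa hSane
  -- derivatives of scaled quantities
  have hS0 : (0:ℝ) < S 0 := hSpos 0 le_rfl
  have hMderiv : ∀ t ≥ (0:ℝ), HasDerivWithinAt M (-(τ * a) * W t) (Set.Ici 0) t := by
    intro t ht
    have h := aux_deriv S SS a _ _ t (hSpos t ht) (hS t ht) (hSS t ht)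
    convert h using 1
    have hpos := hSpos t ht
    have hne : S t ≠ 0 := hpos.ne'
    have e2 : S t ^ (1 + a) = S t * S t ^ a := by
      rw [Real.rpow_add hpos, Real.rpow_one]
    simp only [hWdef, e2]
    have hpa : S t ^ a ≠ 0 := (Real.rpow_pos_of_pos hpos a).ne'
    field_simp
    ring
  have hP1deriv : ∀ t ≥ (0:ℝ),
      HasDerivWithinAt (P 1) (-(τ + (K:ℝ)*γ) * P 1 t + (τ * a) * W t) (Set.Ici 0) t := by
    intro t ht
    have hpos := hSpos t ht
    have h := aux_deriv S (SI 1) a _ _ t hpos (hS t ht) (hSI1 t ht)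
    convert h using 1
    have hne : S t ≠ 0 := hpos.ne'
    have e2 : S t ^ (1 + a) = S t * S t ^ a := by
      rw [Real.rpow_add hpos, Real.rpow_one]
    simp only [hWdef, hPdef, e2]
    have hpa : S t ^ a ≠ 0 := (Real.rpow_pos_of_pos hpos a).ne'
    field_simp
    ring
  have hPjderiv : ∀ j, 2 ≤ j → j ≤ K → ∀ t ≥ (0:ℝ),
      HasDerivWithinAt (P j) (-(τ + (K:ℝ)*γ) * P j t + (K:ℝ)*γ * P (j-1) t) (Set.Ici 0) t := by
    intro j hj2 hjK t ht
    have hpos := hSpos t ht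
    have h := aux_deriv S (SI j) a _ _ t hpos (hS t ht) (hSIj j hj2 hjK t ht)
    convert h using 1
    have hne : S t ≠ 0 := hpos.ne'
    have e2 : S t ^ (1 + a) = S t * S t ^ a := by
      rw [Real.rpow_add hpos, Real.rpow_one]
    simp only [hPdef, e2]
    have hpa : S t ^ a ≠ 0 := (Real.rpow_pos_of_pos hpos a).ne'
    field_simp
    ring
  have hNderiv : ∀ t ≥ (0:ℝ),
      HasDerivWithinAt N ((K:ℝ)*γ * P K t) (Set.Ici 0) t := by
    intro t ht
    have hpos := hSpos t ht
    have h := aux_deriv S SR a _ _ t hpos (hS t ht) (hSR t ht)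
    convert h using 1
    have hne : S t ≠ 0 := hpos.ne'
    have e2 : S t ^ (1 + a) = S t * S t ^ a := by
      rw [Real.rpow_add hpos, Real.rpow_one]
    simp only [hPdef, e2]
    have hpa : S t ^ a ≠ 0 := (Real.rpow_pos_of_pos hpos a).ne'
    field_simp
    ring
  -- integrals
  set J : ℝ := ∫ t in Set.Ioi (0:ℝ), W t with hJdef
  set I : ℕ → ℝ := fun i => ∫ t in Set.Ioi (0:ℝ), P i t with hIdef
  have hWint' : IntegrableOn W (Set.Ici 0) := hWint
  have toIoi : ∀ f : ℝ → ℝ, IntegrableOn f (Set.Ici (0:ℝ)) → IntegrableOn f (Set.Ioi (0:ℝ)) :=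
    fun f h => h.mono_set Set.Ioi_subset_Ici_self
  have hPint' : ∀ i, 1 ≤ i → i ≤ K → IntegrableOn (P i) (Set.Ici 0) := hPint
  -- FTC for M
  have eqM : τ * a * J = M 0 - Minf := by
    have h := aux_ftc M (fun t => -(τ * a) * W t) Minf hMderiv
      (hWint'.const_mul _) hMlim
    rw [MeasureTheory.integral_const_mul] at h
    linarith [h]
  -- FTC for P 1
  have eqP1 : (τ + (K:ℝ)*γ) * I 1 = M 0 - Minf := by
    have hint : IntegrableOn (fun t => -(τ + (K:ℝ)*γ) * P 1 t + (τ * a) * W t) (Set.Ici 0) :=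
      ((hPint' 1 le_rfl hK).const_mul _).add (hWint'.const_mul _)
    have h := aux_ftc (P 1) _ 0 hP1deriv hint (hPlim 1 le_rfl hK)
    rw [MeasureTheory.integral_add (toIoi _ ((hPint' 1 le_rfl hK).const_mul _))
        (toIoi _ (hWint'.const_mul _)),
      MeasureTheory.integral_const_mul, MeasureTheory.integral_const_mul] at h
    have hP10 : P 1 0 = 0 := by simp [hPdef, hSI0 1 le_rfl hK]
    rw [hP10] at h
    have : -(τ + (K:ℝ)*γ) * I 1 + τ * a * J = 0 := by
      simpa [hIdef, hJdef] using h
    linarith [eqM, this]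
  -- FTC for P j
  have eqPj : ∀ j, 2 ≤ j → j ≤ K →
      (τ + (K:ℝ)*γ) * I j = (K:ℝ)*γ * I (j-1) := by
    intro j hj2 hjK
    have hj1 : 1 ≤ j - 1 := by omega
    have hjK1 : j - 1 ≤ K := by omega
    have hj1' : 1 ≤ j := by omega
    have hint : IntegrableOn
        (fun t => -(τ + (K:ℝ)*γ) * P j t + (K:ℝ)*γ * P (j-1) t) (Set.Ici 0) :=
      ((hPint' j hj1' hjK).const_mul _).add ((hPint' (j-1) hj1 hjK1).const_mul _)
    have h := aux_ftc (P j) _ 0 (hPjderiv j hj2 hjK) hint (hPlim j hj1' hjK)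
    rw [MeasureTheory.integral_add (toIoi _ ((hPint' j hj1' hjK).const_mul _))
        (toIoi _ ((hPint' (j-1) hj1 hjK1).const_mul _)),
      MeasureTheory.integral_const_mul, MeasureTheory.integral_const_mul] at h
    have hPj0 : P j 0 = 0 := by simp [hPdef, hSI0 j hj1' hjK]
    rw [hPj0] at h
    have : -(τ + (K:ℝ)*γ) * I j + (K:ℝ)*γ * I (j-1) = 0 := by
      simpa [hIdef] using h
    linarith [this]
  -- FTC for N
  have eqN : (K:ℝ)*γ * I K = Ninf := by
    have h := aux_ftc N (fun t => (K:ℝ)*γ * P K t) Ninf hNderiv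
      ((hPint' K hK le_rfl).const_mul _) hNlim
    rw [MeasureTheory.integral_const_mul] at h
    have hN0 : N 0 = 0 := by simp [hNdef, hSR0]
    rw [hN0] at h
    simpa [hIdef] using h
  -- induction
  set r : ℝ := ((K:ℝ)*γ) / (τ + (K:ℝ)*γ) with hrdef
  have claim : ∀ j, 1 ≤ j → j ≤ K →
      (τ + (K:ℝ)*γ) * I j = r ^ (j - 1) * (M 0 - Minf) := by
    intro j hj1
    induction j, hj1 using Nat.le_induction with
    | base => intro _; simpa using eqP1
    | succ j hj ih =>
      intro hjK
      have hjK' : j ≤ K := by omega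
      have h1 := eqPj (j+1) (by omega) hjK
      have h2 := ih hjK'
      have hsub : j + 1 - 1 = j := by omega
      rw [hsub] at h1
      rw [h1]
      have : (K:ℝ)*γ * I j = r * ((τ + (K:ℝ)*γ) * I j) := by
        rw [hrdef, div_mul_eq_mul_div, eq_div_iff hg.ne']
        ring
      rw [this, h2]
      have hj' : j - 1 + 1 = j := by omega
      rw [hsub, ← mul_assoc, mul_comm r (r ^ (j-1)), ← pow_succ, hj']
  have hNval : Ninf = r ^ K * (M 0 - Minf) := by
    have h := claim K hK le_rfl
    have : (K:ℝ)*γ * I K = r * ((τ + (K:ℝ)*γ) * I K) := by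
      rw [hrdef, div_mul_eq_mul_div, eq_div_iff hg.ne']
      ring
    rw [this, h] at eqN
    rw [← eqN, ← mul_assoc, mul_comm r (r ^ (K-1)), ← pow_succ]
    have hK' : K - 1 + 1 = K := by omega
    rw [hK']
  rw [sub_sub_cancel]
  exact hNval
end
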